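/- For x > 0, α, τ ∈ ℝ and δ ∈ [0, π/2), one has |Im K_{α+iτ}(x)| ≤ e^{-δ|τ|} K_α(x cos δ). -/

import Mathlib

open MeasureTheory Set Filter Complex

/-- `Im K_{α+iτ}(x) = ∫_0^∞ e^{-x cosh u} sinh(α u) sin(τ u) du`. -/
noncomputable def ImK (α τ x : ℝ) : ℝ :=
  ∫ u in Set.Ioi (0:ℝ), Real.exp (-(x * Real.cosh u)) * Real.sinh (α * u) * Real.sin (τ * u)

/-- `K_α(y) = ∫_0^∞ e^{-y cosh u} cosh(α u) du` (real-valued for real `α`). -/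
noncomputable def Kreal (α y : ℝ) : ℝ :=
  ∫ u in Set.Ioi (0:ℝ), Real.exp (-(y * Real.cosh u)) * Real.cosh (α * u)

noncomputable def Fc (x α τ : ℝ) (z : ℂ) : ℂ :=
  Complex.exp (-(x * Complex.cosh z)) * Complex.sinh (α * z) * Complex.exp (τ * z * I)

lemma coshre (t y : ℝ) : (Complex.cosh (t + y * I)).re = Real.cosh t * Real.cos y := by
  rw [Complex.cosh_add, Complex.cosh_mul_I, Complex.sinh_mul_I]
  simp [← Complex.ofReal_cosh, ← Complex.ofReal_sinh, ← Complex.ofReal_cos,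
    ← Complex.ofReal_sin, Complex.add_re, Complex.mul_re]

lemma norm_csinh_le (w : ℂ) : ‖Complex.sinh w‖ ≤ Real.cosh w.re := by
  simp only [Complex.sinh, Real.cosh_eq]
  calc ‖(Complex.exp w - Complex.exp (-w)) / 2‖
      = ‖Complex.exp w - Complex.exp (-w)‖ / 2 := by
        rw [norm_div]; norm_num
    _ ≤ (‖Complex.exp w‖ + ‖Complex.exp (-w)‖) / 2 := by
        gcongr; exact norm_sub_le _ _
    _ = (Real.exp w.re + Real.exp (-w.re)) / 2 := by
        simp [Complex.norm_exp]

lemma normFc_le (x α τ t y : ℝ) :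
    ‖Fc x α τ (t + y * I)‖ ≤
      Real.exp (-(τ * y)) * (Real.exp (-(x * Real.cos y * Real.cosh t)) * Real.cosh (α * t)) := by
  have h1 : ‖Complex.exp (-(x * Complex.cosh (t + y * I)))‖
      = Real.exp (-(x * Real.cos y * Real.cosh t)) := by
    rw [Complex.norm_exp]
    congr 1
    rw [Complex.neg_re, Complex.re_ofReal_mul, coshre]; ring
  have h2 : ‖Complex.exp ((τ : ℂ) * (t + y * I) * I)‖ = Real.exp (-(τ * y)) := by
    rw [Complex.norm_exp]
    congr 1
    simp [Complex.mul_re, Complex.mul_im]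
  have h3 : ‖Complex.sinh ((α : ℂ) * (t + y * I))‖ ≤ Real.cosh (α * t) := by
    refine (norm_csinh_le _).trans_eq ?_
    congr 1
    simp [Complex.re_ofReal_mul]
  calc ‖Fc x α τ (t + y * I)‖
      = ‖Complex.exp (-(x * Complex.cosh (t + y * I)))‖ *
        ‖Complex.sinh ((α : ℂ) * (t + y * I))‖ * ‖Complex.exp ((τ : ℂ) * (t + y * I) * I)‖ := by
        rw [Fc, norm_mul, norm_mul]
    _ ≤ Real.exp (-(x * Real.cos y * Real.cosh t)) * Real.cosh (α * t) * Real.exp (-(τ * y)) := by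
        rw [h1, h2]
        gcongr
    _ = _ := by ring

lemma sq_half_le_cosh (t : ℝ) : t ^ 2 / 2 ≤ Real.cosh t := by
  have h1 : Real.cosh t = 2 * Real.sinh (t / 2) ^ 2 + 1 := by
    have := Real.cosh_sq (t / 2)
    have h2 := Real.cosh_two_mul (t / 2)
    have h5 : 2 * (t / 2) = t := by ring
    rw [h5] at h2
    rw [h2, this]; ring
  have h3 : |t / 2| ≤ |Real.sinh (t / 2)| := by
    rw [Real.abs_sinh]
    exact Real.self_le_sinh_iff.2 (abs_nonneg _) |>.trans_eq rfl
  have h4 : (t / 2) ^ 2 ≤ Real.sinh (t / 2) ^ 2 := by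
    rw [← _root_.sq_abs (t/2), ← _root_.sq_abs (Real.sinh (t/2))]
    exact pow_le_pow_left₀ (abs_nonneg _) h3 2
  nlinarith [h4]

lemma cosh_le_exp_abs (t : ℝ) : Real.cosh t ≤ Real.exp |t| := by
  rw [Real.cosh_eq]
  have := Real.exp_le_exp.2 (le_abs_self t)
  have := Real.exp_le_exp.2 (neg_le_abs t)
  linarith

lemma integrableK {c : ℝ} (hc : 0 < c) (α : ℝ) :
    Integrable (fun t : ℝ => Real.exp (-(c * Real.cosh t)) * Real.cosh (α * t)) := by
  have hmeas : AEStronglyMeasurable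
      (fun t : ℝ => Real.exp (-(c * Real.cosh t)) * Real.cosh (α * t)) volume :=
    (Continuous.mul (by fun_prop) (by fun_prop)).aestronglyMeasurable
  refine Integrable.mono'
    ((integrable_exp_neg_mul_sq (show (0:ℝ) < c/4 by linarith)).const_mul
      (Real.exp (α ^ 2 / c))) hmeas ?_
  filter_upwards with t
  rw [Real.norm_eq_abs, _root_.abs_of_nonneg (by positivity)]
  calc Real.exp (-(c * Real.cosh t)) * Real.cosh (α * t)
      ≤ Real.exp (-(c * (t ^ 2 / 2))) * Real.exp |α * t| := by
        gcongr
        · exact sq_half_le_cosh t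
        · exact cosh_le_exp_abs _
    _ = Real.exp (-(c * (t ^ 2 / 2)) + |α| * |t|) := by
        rw [← Real.exp_add, abs_mul]
    _ ≤ Real.exp (α ^ 2 / c + -(c/4) * t ^ 2) := by
        apply Real.exp_le_exp.2
        have key : |α| * |t| ≤ α ^ 2 / c + c / 4 * t ^ 2 := by
          have h1 : c * (|α| * |t|) ≤ α ^ 2 + c ^ 2 / 4 * t ^ 2 := by
            nlinarith [sq_nonneg (|α| - c * |t| / 2), _root_.sq_abs t, _root_.sq_abs α]
          calc |α| * |t| = (c * (|α| * |t|)) / c := by field_simp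
            _ ≤ (α ^ 2 + c ^ 2 / 4 * t ^ 2) / c := by gcongr
            _ = α ^ 2 / c + c / 4 * t ^ 2 := by field_simp
        linarith
    _ = Real.exp (α ^ 2 / c) * Real.exp (-(c/4) * t ^ 2) := Real.exp_add _ _

lemma contFc (x α τ : ℝ) : Continuous (Fc x α τ) := by
  unfold Fc; fun_prop

lemma integrable_line (x α τ y : ℝ) (hxy : 0 < x * Real.cos y) :
    Integrable (fun t : ℝ => Fc x α τ ((t : ℂ) + y * I)) := by
  have hK := (integrableK hxy α).const_mul (Real.exp (-(τ * y)))
  refine hK.mono' (((contFc x α τ).comp (by fun_prop)).aestronglyMeasurable) ?_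
  filter_upwards with t
  exact normFc_le x α τ t y

lemma tendsto_vert_aux (c α : ℝ) (hc : 0 < c) :
    Tendsto (fun R : ℝ => Real.exp (-(c * Real.cosh R)) * Real.cosh (α * R)) atTop (nhds 0) := by
  have hq : Tendsto (fun R : ℝ => |α| * R - c * R ^ 2 / 2) atTop atBot := by
    have heq : (fun R : ℝ => |α| * R - c * R ^ 2 / 2)
        = fun R : ℝ => R * (|α| + -(c/2) * R) := by funext R; ring
    rw [heq]
    exact tendsto_id.atTop_mul_atBot₀
      (tendsto_atBot_add_const_left _ _ ((tendsto_id (α := ℝ)).const_mul_atTop_of_neg (by linarith)))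
  refine squeeze_zero' (Eventually.of_forall fun R => by positivity) ?_
    (Real.tendsto_exp_atBot.comp hq)
  filter_upwards [eventually_ge_atTop (0:ℝ)] with R hR
  calc Real.exp (-(c * Real.cosh R)) * Real.cosh (α * R)
      ≤ Real.exp (-(c * (R ^ 2 / 2))) * Real.exp |α * R| := by
        gcongr
        · exact sq_half_le_cosh R
        · exact cosh_le_exp_abs _
    _ = Real.exp (-(c * (R ^ 2 / 2)) + |α| * |R|) := by rw [← Real.exp_add, abs_mul]
    _ = Real.exp (|α| * R - c * R ^ 2 / 2) := by rw [_root_.abs_of_nonneg hR]; ring_nf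

lemma contour_shift (x α τ δ : ℝ) (hx : 0 < x) (hτ : 0 ≤ τ) (hδ0 : 0 ≤ δ)
    (hδπ : δ < Real.pi / 2) :
    (∫ t : ℝ, Fc x α τ (t : ℂ)) = ∫ t : ℝ, Fc x α τ ((t : ℂ) + δ * I) := by
  have hπ : 0 < Real.pi / 2 := by positivity
  have hcos : 0 < Real.cos δ := Real.cos_pos_of_mem_Ioo ⟨by linarith, hδπ⟩
  have hc : 0 < x * Real.cos δ := mul_pos hx hcos
  have hdiff : Differentiable ℂ (Fc x α τ) := by unfold Fc; fun_prop
  have h0 : Integrable (fun t : ℝ => Fc x α τ (t : ℂ)) := by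
    have := integrable_line x α τ 0 (by simpa using hx)
    simpa using this
  have hδl : Integrable (fun t : ℝ => Fc x α τ ((t : ℂ) + δ * I)) :=
    integrable_line x α τ δ hc
  -- the rectangle identity
  have key : ∀ R : ℝ,
      (∫ t in (-R)..R, Fc x α τ (t : ℂ)) - (∫ t in (-R)..R, Fc x α τ ((t : ℂ) + δ * I))
        = I • (∫ y in (0:ℝ)..δ, Fc x α τ ((-R : ℝ) + (y : ℝ) * I))
          - I • (∫ y in (0:ℝ)..δ, Fc x α τ ((R : ℝ) + (y : ℝ) * I)) := by
    intro R
    have rect := Complex.integral_boundary_rect_eq_zero_of_differentiableOn (Fc x α τ)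
      (-(R : ℂ)) ((R : ℂ) + δ * I) hdiff.differentiableOn
    simp only [Complex.neg_re, Complex.neg_im, Complex.add_re, Complex.add_im,
      Complex.ofReal_re, Complex.ofReal_im, Complex.re_ofReal_mul, Complex.im_ofReal_mul,
      Complex.I_re, Complex.I_im, mul_zero, mul_one, neg_zero, Complex.ofReal_zero,
      zero_mul, add_zero, zero_add, Complex.ofReal_neg] at rect
    push_cast
    linear_combination rect
  -- vertical integrals vanish
  have hvb : ∀ R : ℝ, 0 ≤ R → ∀ s : ℝ, |s| = R →
      ‖∫ y in (0:ℝ)..δ, Fc x α τ ((s : ℝ) + (y : ℝ) * I)‖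
        ≤ Real.exp (-(x * Real.cos δ * Real.cosh R)) * Real.cosh (α * R) * |δ - 0| := by
    intro R hR s hs
    apply intervalIntegral.norm_integral_le_of_norm_le_const
    intro y hy
    rw [Set.uIoc_of_le hδ0] at hy
    have hy0 : 0 ≤ y := le_of_lt hy.1
    have hyδ : y ≤ δ := hy.2
    have hcosy : Real.cos δ ≤ Real.cos y :=
      Real.cos_le_cos_of_nonneg_of_le_pi hy0 (by linarith [Real.pi_pos]) hyδ
    calc ‖Fc x α τ ((s : ℂ) + (y : ℝ) * I)‖
        ≤ Real.exp (-(τ * y)) * (Real.exp (-(x * Real.cos y * Real.cosh s)) * Real.cosh (α * s)) :=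
          normFc_le x α τ s y
      _ ≤ 1 * (Real.exp (-(x * Real.cos δ * Real.cosh s)) * Real.cosh (α * s)) := by
          gcongr
          exact Real.exp_le_one_iff.2 (by nlinarith)
      _ = Real.exp (-(x * Real.cos δ * Real.cosh R)) * Real.cosh (α * R) := by
          rw [one_mul, ← Real.cosh_abs s, ← Real.cosh_abs (α * s), hs, abs_mul, hs,
            ← Real.cosh_abs (α * R), abs_mul, _root_.abs_of_nonneg hR]
  have hA : Tendsto (fun R : ℝ => ∫ t in (-R)..R, Fc x α τ (t : ℂ)) atTop
      (nhds (∫ t : ℝ, Fc x α τ (t : ℂ))) :=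
    intervalIntegral_tendsto_integral h0 tendsto_neg_atTop_atBot tendsto_id
  have hB : Tendsto (fun R : ℝ => ∫ t in (-R)..R, Fc x α τ ((t : ℂ) + δ * I)) atTop
      (nhds (∫ t : ℝ, Fc x α τ ((t : ℂ) + δ * I))) :=
    intervalIntegral_tendsto_integral hδl tendsto_neg_atTop_atBot tendsto_id
  have hV : Tendsto (fun R : ℝ =>
      Real.exp (-(x * Real.cos δ * Real.cosh R)) * Real.cosh (α * R) * |δ - 0|
      + Real.exp (-(x * Real.cos δ * Real.cosh R)) * Real.cosh (α * R) * |δ - 0|)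
      atTop (nhds 0) := by
    have h1 := (tendsto_vert_aux (x * Real.cos δ) α hc).mul_const |δ - 0|
    simpa using h1.add h1
  have hdiff0 : Tendsto (fun R : ℝ => (∫ t in (-R)..R, Fc x α τ (t : ℂ))
      - ∫ t in (-R)..R, Fc x α τ ((t : ℂ) + δ * I)) atTop (nhds 0) := by
    apply squeeze_zero_norm' ?_ hV
    filter_upwards [eventually_ge_atTop (0:ℝ)] with R hR
    rw [key R]
    calc ‖(I • ∫ y in (0:ℝ)..δ, Fc x α τ ((-R : ℝ) + (y : ℝ) * I))
          - I • ∫ y in (0:ℝ)..δ, Fc x α τ ((R : ℝ) + (y : ℝ) * I)‖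
        ≤ ‖I • ∫ y in (0:ℝ)..δ, Fc x α τ ((-R : ℝ) + (y : ℝ) * I)‖
          + ‖I • ∫ y in (0:ℝ)..δ, Fc x α τ ((R : ℝ) + (y : ℝ) * I)‖ := norm_sub_le _ _
      _ = ‖∫ y in (0:ℝ)..δ, Fc x α τ ((-R : ℝ) + (y : ℝ) * I)‖
          + ‖∫ y in (0:ℝ)..δ, Fc x α τ ((R : ℝ) + (y : ℝ) * I)‖ := by
          rw [norm_smul, norm_smul, Complex.norm_I, one_mul, one_mul]
      _ ≤ _ := add_le_add
          (hvb R hR (-R) (by rw [abs_neg, _root_.abs_of_nonneg hR]))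
          (hvb R hR R (_root_.abs_of_nonneg hR))
  have huniq := tendsto_nhds_unique (hA.sub hB) hdiff0
  exact sub_eq_zero.mp huniq

lemma even_integral {f : ℝ → ℝ} (hf : Integrable f) (he : ∀ t, f (-t) = f t) :
    ∫ t, f t = 2 * ∫ t in Set.Ioi (0:ℝ), f t := by
  have h1 : ∫ t in Set.Iic (0:ℝ), f t = ∫ t in Set.Ioi (0:ℝ), f t := by
    have h2 : (∫ t in Set.Ioi (0:ℝ), f (-t)) = ∫ t in Set.Iic (-(0:ℝ)), f t :=
      integral_comp_neg_Ioi (0:ℝ) f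
    simp only [neg_zero] at h2
    rw [← h2]
    exact setIntegral_congr_fun measurableSet_Ioi fun t _ => (he t)
  rw [← intervalIntegral.integral_Iic_add_Ioi hf.integrableOn hf.integrableOn, h1, two_mul]

lemma im_Fc (x α τ t : ℝ) :
    (Fc x α τ (t : ℂ)).im
      = Real.exp (-(x * Real.cosh t)) * Real.sinh (α * t) * Real.sin (τ * t) := by
  have h : Fc x α τ (t : ℂ)
      = ((Real.exp (-(x * Real.cosh t)) * Real.sinh (α * t) : ℝ) : ℂ)
        * (((Real.cos (τ * t) : ℝ) : ℂ) + ((Real.sin (τ * t) : ℝ) : ℂ) * I) := by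
    rw [Fc, Complex.ofReal_cos, Complex.ofReal_sin, ← Complex.ofReal_mul τ t,
      ← Complex.exp_mul_I]
    push_cast
    ring
  rw [h]
  simp only [Complex.mul_im, Complex.add_im, Complex.add_re, Complex.mul_re,
    Complex.ofReal_re, Complex.ofReal_im, Complex.I_re, Complex.I_im]
  ring

lemma main_nonneg (x : ℝ) (hx : 0 < x) (α τ δ : ℝ) (hτ : 0 ≤ τ) (hδ0 : 0 ≤ δ)
    (hδπ : δ < Real.pi / 2) :
    |ImK α τ x| ≤ Real.exp (-(δ * τ)) * Kreal α (x * Real.cos δ) := by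
  have hπ : 0 < Real.pi / 2 := by positivity
  have hcos : 0 < Real.cos δ := Real.cos_pos_of_mem_Ioo ⟨by linarith, hδπ⟩
  have hc : 0 < x * Real.cos δ := mul_pos hx hcos
  have h0 : Integrable (fun t : ℝ => Fc x α τ (t : ℂ)) := by
    have := integrable_line x α τ 0 (by simpa using hx)
    simpa using this
  have hδl : Integrable (fun t : ℝ => Fc x α τ ((t : ℂ) + δ * I)) :=
    integrable_line x α τ δ hc
  -- the imaginary part of the line integral is 2 ImK
  have him : (∫ t : ℝ, Fc x α τ (t : ℂ)).im = 2 * ImK α τ x := by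
    rw [show (∫ t : ℝ, Fc x α τ (t : ℂ)).im = RCLike.im (∫ t : ℝ, Fc x α τ (t : ℂ)) from
      (RCLike.im_to_complex).symm, ← integral_im h0]
    simp only [RCLike.im_to_complex]
    have heq : (fun t : ℝ => (Fc x α τ (t : ℂ)).im)
        = fun t : ℝ => Real.exp (-(x * Real.cosh t)) * Real.sinh (α * t) * Real.sin (τ * t) :=
      funext fun t => im_Fc x α τ t
    rw [show (∫ t : ℝ, (Fc x α τ (t:ℂ)).im)
        = ∫ t : ℝ, Real.exp (-(x * Real.cosh t)) * Real.sinh (α * t) * Real.sin (τ * t) from by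
      rw [← heq]]
    rw [even_integral]
    · rfl
    · have h3 := h0.im
      simp only [RCLike.im_to_complex] at h3
      rwa [heq] at h3
    · intro t
      simp [Real.cosh_neg, mul_neg, Real.sinh_neg, Real.sin_neg]
  -- the norm bound on the shifted line
  have hnorm : ‖∫ t : ℝ, Fc x α τ ((t : ℂ) + δ * I)‖
      ≤ Real.exp (-(τ * δ)) * (2 * Kreal α (x * Real.cos δ)) := by
    have hKint := integrableK hc α
    calc ‖∫ t : ℝ, Fc x α τ ((t : ℂ) + δ * I)‖
        ≤ ∫ t : ℝ, Real.exp (-(τ * δ)) *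
            (Real.exp (-(x * Real.cos δ * Real.cosh t)) * Real.cosh (α * t)) := by
          refine MeasureTheory.norm_integral_le_of_norm_le (hKint.const_mul _) ?_
          filter_upwards with t
          exact normFc_le x α τ t δ
      _ = Real.exp (-(τ * δ)) *
            ∫ t : ℝ, Real.exp (-(x * Real.cos δ * Real.cosh t)) * Real.cosh (α * t) :=
          MeasureTheory.integral_const_mul _ _
      _ = Real.exp (-(τ * δ)) * (2 * Kreal α (x * Real.cos δ)) := by
          congr 1
          rw [even_integral hKint fun t => by
            simp [Real.cosh_neg, mul_neg]]
          rfl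
  have hshift := contour_shift x α τ δ hx hτ hδ0 hδπ
  have hle : |(∫ t : ℝ, Fc x α τ (t : ℂ)).im| ≤ ‖∫ t : ℝ, Fc x α τ ((t : ℂ) + δ * I)‖ := by
    rw [hshift]
    calc |(∫ t : ℝ, Fc x α τ ((t : ℂ) + δ * I)).im|
        ≤ ‖∫ t : ℝ, Fc x α τ ((t : ℂ) + δ * I)‖ := Complex.abs_im_le_norm _
      _ = ‖∫ t : ℝ, Fc x α τ ((t : ℂ) + δ * I)‖ := rfl
  rw [him] at hle
  have habs : |2 * ImK α τ x| ≤ Real.exp (-(τ * δ)) * (2 * Kreal α (x * Real.cos δ)) :=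
    hle.trans hnorm
  rw [abs_mul, _root_.abs_two] at habs
  have h2 : |ImK α τ x| ≤ Real.exp (-(τ * δ)) * Kreal α (x * Real.cos δ) := by linarith
  rw [show -(δ * τ) = -(τ * δ) by ring]
  exact h2

lemma imk_neg (α τ x : ℝ) : ImK α (-τ) x = -ImK α τ x := by
  rw [ImK, ImK, ← MeasureTheory.integral_neg]
  refine setIntegral_congr_fun measurableSet_Ioi fun u _ => ?_
  simp [neg_mul, Real.sin_neg, mul_neg]

/-- `|Im K_{α+iτ}(x)| ≤ e^{-δ|τ|} K_α(x cos δ)` for `δ ∈ [0, π/2)`. -/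
theorem im_besselK_bound (x : ℝ) (hx : 0 < x) (α τ δ : ℝ)
    (hδ : δ ∈ Set.Ico 0 (Real.pi / 2)) :
    |ImK α τ x| ≤ Real.exp (-(δ * |τ|)) * Kreal α (x * Real.cos δ) := by
  obtain ⟨hδ0, hδπ⟩ := hδ
  rcases le_or_gt 0 τ with hτ | hτ
  · rw [_root_.abs_of_nonneg hτ]
    exact main_nonneg x hx α τ δ hτ hδ0 hδπ
  · rw [abs_of_neg hτ]
    have := main_nonneg x hx α (-τ) δ (by linarith) hδ0 hδπ
    rwa [imk_neg, abs_neg] at this
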